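/- Let $f$ be $C^2$ on $[\log 2, \infty)$ with $f > 0$, $f' < 0$, $f'' > 0$, $f(x) \to 0$, $N^\varepsilon(-f'(\log N))^{1/2} \to \infty$ for every $\varepsilon > 0$, and $\lim_{\varepsilon \downarrow 0} \limsup_{k\to\infty} \frac{-f'((1-\varepsilon)k)}{-f'(k)} = 1$. Let $S_N = \sum_{j=2}^N \sqrt{f(\log j) - f(\log N)}$. Then $\lim_{N\to\infty} \frac{S_N}{N(-f'(\log N))^{1/2}} = \frac{\sqrt{\pi}}{2}$. -/

import Mathlib

open Filter Set MeasureTheory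

lemma aux_gamma_int : IntegrableOn (fun x : ℝ => Real.exp (-x) * x ^ ((1:ℝ)/2)) (Ioi 0) := by
  have := Real.GammaIntegral_convergent (s := 3/2) (by norm_num)
  norm_num at this
  exact this

lemma aux_gamma_val :
    (∫ x in Ioi (0:ℝ), Real.exp (-x) * x ^ ((1:ℝ)/2)) = Real.sqrt Real.pi / 2 := by
  have h1 : Real.Gamma (3/2) = ∫ x in Ioi (0:ℝ), Real.exp (-x) * x ^ ((3:ℝ)/2 - 1) :=
    Real.Gamma_eq_integral (by norm_num)
  have h2 : Real.Gamma ((1:ℝ)/2 + 1) = (1/2) * Real.Gamma (1/2) :=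
    Real.Gamma_add_one (by norm_num)
  rw [Real.Gamma_one_half_eq] at h2
  norm_num at h1 h2
  rw [← h1, h2]; ring

lemma aux_J_tendsto :
    Tendsto (fun N : ℕ => ∫ x in (0:ℝ)..Real.log N, Real.exp (-x) * x ^ ((1:ℝ)/2)) atTop
      (nhds (Real.sqrt Real.pi / 2)) := by
  have h := MeasureTheory.intervalIntegral_tendsto_integral_Ioi 0 aux_gamma_int
    (Real.tendsto_log_atTop.comp (tendsto_natCast_atTop_atTop (R := ℝ)) : Tendsto (fun N : ℕ => Real.log N) atTop atTop)
  rwa [aux_gamma_val] at h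

lemma aux_subst (N : ℕ) (hN : 2 ≤ N) :
    (∫ t in (1:ℝ)..(N:ℝ), Real.sqrt (Real.log N - Real.log t))
      = N * ∫ x in (0:ℝ)..Real.log N, Real.exp (-x) * Real.sqrt x := by
  have hN0 : (0:ℝ) < N := by exact_mod_cast Nat.lt_of_lt_of_le (by norm_num) hN
  have hN1 : (1:ℝ) ≤ N := by exact_mod_cast Nat.le_of_lt (Nat.lt_of_lt_of_le (by norm_num) hN)
  set g : ℝ → ℝ := fun t => Real.sqrt (Real.log N - Real.log t) with hg
  set φ : ℝ → ℝ := fun x => N * Real.exp (-x) with hφ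
  have hlogN : (0:ℝ) ≤ Real.log N := Real.log_nonneg hN1
  have hφd : ∀ x ∈ uIcc (0:ℝ) (Real.log N), HasDerivAt φ (-((N:ℝ) * Real.exp (-x))) x := by
    intro x _
    have h := ((Real.hasDerivAt_exp (-x)).comp x (hasDerivAt_neg x)).const_mul (N:ℝ)
    exact h.congr_deriv (by ring)
  have hφcont : ContinuousOn (fun x => -((N:ℝ) * Real.exp (-x))) (uIcc (0:ℝ) (Real.log N)) := by
    fun_prop
  have himg : φ '' uIcc (0:ℝ) (Real.log N) ⊆ Ici (1:ℝ) := by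
    rintro _ ⟨x, hx, rfl⟩
    rw [uIcc_of_le hlogN] at hx
    have : Real.exp (-Real.log N) ≤ Real.exp (-x) := Real.exp_le_exp.2 (by linarith [hx.2])
    have h2 : (N:ℝ) * Real.exp (-Real.log N) = 1 := by
      rw [Real.exp_neg, Real.exp_log hN0, mul_inv_cancel₀ hN0.ne']
    simp only [φ, Set.mem_Ici]
    nlinarith
  have hgcont : ContinuousOn g (φ '' uIcc 0 (Real.log N)) := by
    apply ContinuousOn.mono _ himg
    apply Real.continuous_sqrt.comp_continuousOn
    apply ContinuousOn.sub continuousOn_const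
    exact Real.continuousOn_log.mono (fun x hx => by
      simp only [Set.mem_compl_iff, Set.mem_singleton_iff]
      intro h; rw [h] at hx; exact absurd hx (by norm_num))
  have key := intervalIntegral.integral_comp_smul_deriv' hφd hφcont hgcont
  have hφ0 : φ 0 = N := by simp [φ]
  have hφL : φ (Real.log N) = 1 := by
    simp only [φ, Real.exp_neg, Real.exp_log hN0, mul_inv_cancel₀ hN0.ne']
  rw [hφ0, hφL] at key
  have hgφ : ∀ x : ℝ, g (φ x) = Real.sqrt x := by
    intro x
    simp only [g, φ, Real.log_mul hN0.ne' (Real.exp_ne_zero _), Real.log_exp]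
    ring_nf
  have hfun : (fun x => -(-((N:ℝ) * Real.exp (-x)) • (g ∘ φ) x))
      = fun x => (N:ℝ) * (Real.exp (-x) * Real.sqrt x) := by
    funext x
    simp only [Function.comp, hgφ, smul_eq_mul]
    ring
  calc (∫ t in (1:ℝ)..(N:ℝ), g t) = -∫ u in (N:ℝ)..1, g u := by
        rw [intervalIntegral.integral_symm]
    _ = -∫ x in (0:ℝ)..Real.log N, -((N:ℝ) * Real.exp (-x)) • (g ∘ φ) x := by rw [key]
    _ = ∫ x in (0:ℝ)..Real.log N, (N:ℝ) * (Real.exp (-x) * Real.sqrt x) := by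
        rw [← intervalIntegral.integral_neg, hfun]
    _ = N * ∫ x in (0:ℝ)..Real.log N, Real.exp (-x) * Real.sqrt x := by
        rw [intervalIntegral.integral_const_mul]

lemma aux_cmp (N : ℕ) (hN : 2 ≤ N) :
    (∑ j ∈ Finset.Icc 2 N, Real.sqrt (Real.log N - Real.log j))
        ≤ (∫ t in (1:ℝ)..(N:ℝ), Real.sqrt (Real.log N - Real.log t))
      ∧ (∫ t in (1:ℝ)..(N:ℝ), Real.sqrt (Real.log N - Real.log t))
        ≤ (∑ j ∈ Finset.Icc 2 N, Real.sqrt (Real.log N - Real.log j)) + Real.sqrt (Real.log N) := by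
  have hN0 : (0:ℝ) < N := by exact_mod_cast Nat.lt_of_lt_of_le (by norm_num) hN
  set g : ℝ → ℝ := fun t => Real.sqrt (Real.log N - Real.log t) with hg
  have hcast : (1:ℝ) + ((N - 1 : ℕ) : ℝ) = N := by
    have h1 : 1 ≤ N := by omega
    push_cast [h1]; ring
  have hanti : AntitoneOn g (Icc (1:ℝ) (1 + ((N-1:ℕ):ℝ))) := by
    rw [hcast]
    intro s hs t ht hst
    have hs0 : (0:ℝ) < s := lt_of_lt_of_le one_pos hs.1
    exact Real.sqrt_le_sqrt (sub_le_sub_left (Real.log_le_log hs0 hst) _)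
  have hsum1 : (∑ i ∈ Finset.range (N-1), g (1 + ((i+1:ℕ):ℝ)))
      = ∑ j ∈ Finset.Icc 2 N, g j := by
    rw [← Finset.Ico_add_one_right_eq_Icc, Finset.sum_Ico_eq_sum_range,
      show N + 1 - 2 = N - 1 from by omega]
    exact Finset.sum_congr rfl fun i _ => by congr 1; push_cast; ring
  have hsum2 : (∑ i ∈ Finset.range (N-1), g (1 + ((i:ℕ):ℝ)))
      = (∑ j ∈ Finset.Ico 2 N, g j) + Real.sqrt (Real.log N) := by
    rw [show N - 1 = (N-2) + 1 from by omega, Finset.sum_range_succ']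
    congr 1
    · rw [Finset.sum_Ico_eq_sum_range]
      exact Finset.sum_congr rfl fun i _ => by congr 1; push_cast; ring
    · simp [g]
  have h1 := hanti.sum_le_integral
  have h2 := hanti.integral_le_sum
  rw [hcast, hsum1] at h1
  rw [hcast, hsum2] at h2
  refine ⟨h1, h2.trans ?_⟩
  have : (∑ j ∈ Finset.Ico 2 N, g j) ≤ ∑ j ∈ Finset.Icc 2 N, g j :=
    Finset.sum_le_sum_of_subset_of_nonneg (Finset.Ico_subset_Icc_self)
      (fun j _ _ => Real.sqrt_nonneg _)
  linarith

lemma aux_b_tendsto :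
    Tendsto (fun N : ℕ => (∑ j ∈ Finset.Icc 2 N, Real.sqrt (Real.log N - Real.log j)) / N)
      atTop (nhds (Real.sqrt Real.pi / 2)) := by
  have hJ : Tendsto (fun N : ℕ => ∫ x in (0:ℝ)..Real.log N, Real.exp (-x) * Real.sqrt x) atTop
      (nhds (Real.sqrt Real.pi / 2)) := by
    have heq : (fun x : ℝ => Real.exp (-x) * Real.sqrt x)
        = fun x : ℝ => Real.exp (-x) * x ^ ((1:ℝ)/2) :=
      funext fun x => by rw [Real.sqrt_eq_rpow]
    rw [show (fun N : ℕ => ∫ x in (0:ℝ)..Real.log N, Real.exp (-x) * Real.sqrt x)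
        = fun N : ℕ => ∫ x in (0:ℝ)..Real.log N, Real.exp (-x) * x ^ ((1:ℝ)/2) from
      funext fun N => by rw [heq]]
    exact aux_J_tendsto
  have herr : Tendsto (fun N : ℕ => Real.sqrt (Real.log N) / N) atTop (nhds 0) := by
    apply squeeze_zero' (Filter.Eventually.of_forall fun N =>
      div_nonneg (Real.sqrt_nonneg _) (Nat.cast_nonneg N))
    · filter_upwards [eventually_ge_atTop 1] with N hN
      have hN0 : (0:ℝ) < N := by exact_mod_cast hN
      have hlog : Real.log N ≤ N := le_trans (Real.log_le_sub_one_of_pos hN0) (by linarith)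
      have hs0 : 0 < Real.sqrt N := Real.sqrt_pos.2 hN0
      calc Real.sqrt (Real.log N) / N ≤ Real.sqrt N / N := by gcongr
        _ = (Real.sqrt (N:ℝ))⁻¹ := by
            rw [inv_eq_one_div, div_eq_div_iff hN0.ne' hs0.ne']; nlinarith [Real.mul_self_sqrt hN0.le]
    · have h0 : Tendsto (fun x : ℝ => x ^ (-(1/2):ℝ)) atTop (nhds 0) :=
        tendsto_rpow_neg_atTop (by norm_num)
      have h1 := h0.comp (tendsto_natCast_atTop_atTop (R := ℝ)
        : Tendsto (fun N : ℕ => (N:ℝ)) atTop atTop)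
      refine h1.congr fun N => ?_
      simp only [Function.comp]
      rw [Real.rpow_neg (Nat.cast_nonneg N), ← Real.sqrt_eq_rpow]
  have hlow : Tendsto (fun N : ℕ =>
      (∫ x in (0:ℝ)..Real.log N, Real.exp (-x) * Real.sqrt x) - Real.sqrt (Real.log N) / N)
      atTop (nhds (Real.sqrt Real.pi / 2)) := by
    simpa using hJ.sub herr
  apply tendsto_of_tendsto_of_tendsto_of_le_of_le' hlow hJ
  · filter_upwards [eventually_ge_atTop 2] with N hN
    have hN0 : (0:ℝ) < N := by exact_mod_cast Nat.lt_of_lt_of_le (by norm_num) hN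
    have h2 := (aux_cmp N hN).2
    rw [aux_subst N hN] at h2
    rw [sub_le_iff_le_add, ← add_div, le_div_iff₀ hN0]
    linarith
  · filter_upwards [eventually_ge_atTop 2] with N hN
    have hN0 : (0:ℝ) < N := by exact_mod_cast Nat.lt_of_lt_of_le (by norm_num) hN
    have h1 := (aux_cmp N hN).1
    rw [aux_subst N hN] at h1
    rw [div_le_iff₀ hN0]
    linarith

lemma aux_mono (f' f'' : ℝ → ℝ)
    (hd2 : ∀ x ∈ Set.Ici (Real.log 2), HasDerivWithinAt f' (f'' x) (Set.Ici (Real.log 2)) x)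
    (hf''pos : ∀ x ∈ Set.Ici (Real.log 2), 0 < f'' x) :
    StrictMonoOn f' (Set.Ici (Real.log 2)) := by
  apply strictMonoOn_of_deriv_pos (convex_Ici _)
  · exact fun x hx => (hd2 x hx).differentiableWithinAt.continuousWithinAt
  · intro x hx
    rw [interior_Ici] at hx
    have h := (hd2 x (mem_Ici.2 (mem_Ioi.1 hx).le)).hasDerivAt (Ici_mem_nhds hx)
    rw [h.deriv]
    exact hf''pos x (mem_Ici.2 (mem_Ioi.1 hx).le)

lemma aux_anti (f f' : ℝ → ℝ)
    (hd1 : ∀ x ∈ Set.Ici (Real.log 2), HasDerivWithinAt f (f' x) (Set.Ici (Real.log 2)) x)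
    (hf'neg : ∀ x ∈ Set.Ici (Real.log 2), f' x < 0) :
    StrictAntiOn f (Set.Ici (Real.log 2)) := by
  apply strictAntiOn_of_deriv_neg (convex_Ici _)
  · exact fun x hx => (hd1 x hx).differentiableWithinAt.continuousWithinAt
  · intro x hx
    rw [interior_Ici] at hx
    have h := (hd1 x (mem_Ici.2 (mem_Ioi.1 hx).le)).hasDerivAt (Ici_mem_nhds hx)
    rw [h.deriv]
    exact hf'neg x (mem_Ici.2 (mem_Ioi.1 hx).le)

lemma aux_mvt (f f' f'' : ℝ → ℝ)
    (hd1 : ∀ x ∈ Set.Ici (Real.log 2), HasDerivWithinAt f (f' x) (Set.Ici (Real.log 2)) x)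
    (hd2 : ∀ x ∈ Set.Ici (Real.log 2), HasDerivWithinAt f' (f'' x) (Set.Ici (Real.log 2)) x)
    (hf''pos : ∀ x ∈ Set.Ici (Real.log 2), 0 < f'' x)
    (x y : ℝ) (hx : Real.log 2 ≤ x) (hxy : x ≤ y) :
    (y - x) * (-f' y) ≤ f x - f y ∧ f x - f y ≤ (y - x) * (-f' x) := by
  rcases eq_or_lt_of_le hxy with rfl | hlt
  · simp
  have hy : Real.log 2 ≤ y := hx.trans hxy
  have hcont : ContinuousOn f (Set.Icc x y) := fun t ht =>
    ((hd1 t (hx.trans ht.1)).continuousWithinAt).mono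
      (fun s hs => hx.trans hs.1)
  have hderiv : ∀ t ∈ Set.Ioo x y, HasDerivAt f (f' t) t := fun t ht =>
    (hd1 t (hx.trans ht.1.le)).hasDerivAt (Ici_mem_nhds (lt_of_le_of_lt hx ht.1))
  obtain ⟨c, hc, hceq⟩ := exists_hasDerivAt_eq_slope f f' hlt hcont hderiv
  have hcmem : c ∈ Set.Ici (Real.log 2) := hx.trans hc.1.le
  have hmono := (aux_mono f' f'' hd2 hf''pos).monotoneOn
  have h1 : f' x ≤ f' c := hmono hx hcmem hc.1.le
  have h2 : f' c ≤ f' y := hmono hcmem hy hc.2.le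
  have hyx : y - x ≠ 0 := sub_ne_zero.2 hlt.ne'
  have heq : f' c * (y - x) = f y - f x := by
    rw [hceq]; exact div_mul_cancel₀ _ hyx
  constructor <;> nlinarith [sub_pos.2 hlt]

lemma aux_ratio (f' : ℝ → ℝ)
    (hratio : Tendsto
      (fun ε : ℝ => limsup (fun k : ℝ => -f' ((1 - ε) * k) / -f' k) atTop)
      (nhdsWithin 0 (Set.Ioi 0)) (nhds 1))
    (δ : ℝ) (hδ : 0 < δ) :
    ∃ ε : ℝ, 0 < ε ∧ ε < 1 ∧
      ∀ᶠ k : ℝ in atTop, -f' ((1 - ε) * k) / -f' k < 1 + δ := by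
  have h1 : ∀ᶠ ε in nhdsWithin (0:ℝ) (Set.Ioi 0),
      limsup (fun k : ℝ => -f' ((1 - ε) * k) / -f' k) atTop ∈ Set.Ioo (1/2 : ℝ) (1 + δ) :=
    hratio (Ioo_mem_nhds (by norm_num) (by linarith))
  have h2 : ∀ᶠ ε : ℝ in nhdsWithin (0:ℝ) (Set.Ioi 0), ε ∈ Set.Ioo (0:ℝ) 1 :=
    Ioo_mem_nhdsGT_of_mem (by constructor <;> norm_num)
  obtain ⟨ε, hmem, hε01⟩ := (h1.and h2).exists
  refine ⟨ε, hε01.1, hε01.2, ?_⟩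
  set u := fun k : ℝ => -f' ((1 - ε) * k) / -f' k with hu
  have hbdd : IsBoundedUnder (· ≤ ·) atTop u := by
    by_contra hb
    have hempty : {a : ℝ | ∀ᶠ k : ℝ in atTop, u k ≤ a} = ∅ := by
      ext a
      simp only [Set.mem_setOf_eq, Set.mem_empty_iff_false, iff_false]
      intro h
      exact hb ⟨a, eventually_map.2 h⟩
    have := hmem.1
    rw [Filter.limsup_eq, hempty, Real.sInf_empty] at this
    linarith
  exact eventually_lt_of_limsup_lt hmem.2 hbdd

open Filter in
theorem stmt_19 (f f' f'' : ℝ → ℝ)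
    (hd1 : ∀ x ∈ Set.Ici (Real.log 2), HasDerivWithinAt f (f' x) (Set.Ici (Real.log 2)) x)
    (hd2 : ∀ x ∈ Set.Ici (Real.log 2), HasDerivWithinAt f' (f'' x) (Set.Ici (Real.log 2)) x)
    (hd2cont : ContinuousOn f'' (Set.Ici (Real.log 2)))
    (hfpos : ∀ x ∈ Set.Ici (Real.log 2), 0 < f x)
    (hf'neg : ∀ x ∈ Set.Ici (Real.log 2), f' x < 0)
    (hf''pos : ∀ x ∈ Set.Ici (Real.log 2), 0 < f'' x)
    (hf0 : Tendsto f atTop (nhds 0))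
    (hgrow : ∀ ε > (0 : ℝ),
      Tendsto (fun N : ℕ => (N : ℝ) ^ ε * Real.sqrt (-f' (Real.log N))) atTop atTop)
    (hratio : Tendsto
      (fun ε : ℝ => limsup (fun k : ℝ => -f' ((1 - ε) * k) / -f' k) atTop)
      (nhdsWithin 0 (Set.Ioi 0)) (nhds 1))
    (S : ℕ → ℝ)
    (hS : ∀ N : ℕ, S N = ∑ j ∈ Finset.Icc 2 N, Real.sqrt (f (Real.log j) - f (Real.log N))) :
    Tendsto (fun N : ℕ => S N / ((N : ℝ) * Real.sqrt (-f' (Real.log N)))) atTop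
      (nhds (Real.sqrt Real.pi / 2)) := by
  have hc0 : (0:ℝ) < Real.log 2 := Real.log_pos (by norm_num)
  set b : ℕ → ℝ :=
    fun N => (∑ j ∈ Finset.Icc 2 N, Real.sqrt (Real.log N - Real.log j)) / N with hbdef
  have hbt : Tendsto b atTop (nhds (Real.sqrt Real.pi / 2)) := aux_b_tendsto
  -- Claim 2: lower bound
  have claim2 : ∀ N : ℕ, 2 ≤ N →
      b N ≤ S N / ((N:ℝ) * Real.sqrt (-f' (Real.log N))) := by
    intro N hN
    have hN0 : (0:ℝ) < N := by exact_mod_cast Nat.lt_of_lt_of_le (by norm_num) hN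
    have hL2 : Real.log 2 ≤ Real.log N := Real.log_le_log (by norm_num) (by exact_mod_cast hN)
    have hfL : 0 < -f' (Real.log N) := neg_pos.2 (hf'neg _ hL2)
    have hgN : 0 < Real.sqrt (-f' (Real.log N)) := Real.sqrt_pos.2 hfL
    have hterm : ∀ j ∈ Finset.Icc 2 N,
        Real.sqrt (Real.log N - Real.log j) * Real.sqrt (-f' (Real.log N))
          ≤ Real.sqrt (f (Real.log j) - f (Real.log N)) := by
      intro j hj
      rw [Finset.mem_Icc] at hj
      have hj0 : (0:ℝ) < j := by
        exact_mod_cast Nat.lt_of_lt_of_le (by norm_num) hj.1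
      have hlj : Real.log 2 ≤ Real.log j :=
        Real.log_le_log (by norm_num) (by exact_mod_cast hj.1)
      have hjN : Real.log j ≤ Real.log N := Real.log_le_log hj0 (by exact_mod_cast hj.2)
      have hmvt := (aux_mvt f f' f'' hd1 hd2 hf''pos _ _ hlj hjN).1
      rw [← Real.sqrt_mul (by linarith : (0:ℝ) ≤ Real.log N - Real.log j)]
      exact Real.sqrt_le_sqrt hmvt
    have hsum : (∑ j ∈ Finset.Icc 2 N, Real.sqrt (Real.log N - Real.log j))
        * Real.sqrt (-f' (Real.log N)) ≤ S N := by
      rw [hS, Finset.sum_mul]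
      exact Finset.sum_le_sum hterm
    rw [hbdef]
    dsimp only
    rw [div_le_div_iff₀ hN0 (by positivity)]
    nlinarith [mul_le_mul_of_nonneg_right hsum hN0.le]
  -- Claim 3: upper bound
  have claim3 : ∀ δ : ℝ, 0 < δ → ∀ᶠ N : ℕ in atTop,
      S N / ((N:ℝ) * Real.sqrt (-f' (Real.log N))) ≤ Real.sqrt (1+δ) * b N + δ := by
    intro δ hδ
    obtain ⟨ε, hε0, hε1, hev⟩ := aux_ratio f' hratio δ hδ
    have h1ε : (0:ℝ) < 1 - ε := by linarith
    have hlogcast : Tendsto (fun N : ℕ => Real.log N) atTop atTop :=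
      Real.tendsto_log_atTop.comp (tendsto_natCast_atTop_atTop (R := ℝ))
    have hev1 : ∀ᶠ N : ℕ in atTop,
        -f' ((1-ε) * Real.log N) / -f' (Real.log N) < 1 + δ := hlogcast.eventually hev
    have hev2 : ∀ᶠ N : ℕ in atTop, Real.log 2 / (1-ε) ≤ Real.log N :=
      hlogcast.eventually_ge_atTop _
    have hev3 : ∀ᶠ N : ℕ in atTop,
        Real.sqrt (f (Real.log 2)) / δ < (N:ℝ)^ε * Real.sqrt (-f' (Real.log N)) :=
      (hgrow ε hε0).eventually_gt_atTop _
    filter_upwards [hev1, hev2, hev3, eventually_ge_atTop 2] with N h1 h2 h3 hN2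
    have hN0 : (0:ℝ) < N := by exact_mod_cast Nat.lt_of_lt_of_le (by norm_num) hN2
    set L := Real.log (N:ℝ) with hLdef
    set gN := Real.sqrt (-f' L) with hgNdef
    have hL2 : Real.log 2 ≤ L := Real.log_le_log (by norm_num) (by exact_mod_cast hN2)
    have hL2' : Real.log 2 ≤ (1-ε) * L := by
      have := (div_le_iff₀ h1ε).1 h2
      linarith
    have hfL : 0 < -f' L := neg_pos.2 (hf'neg _ hL2)
    have hgN0 : 0 < gN := Real.sqrt_pos.2 hfL
    have hfεL : -f' ((1-ε)*L) ≤ (1+δ) * (-f' L) := by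
      rw [div_lt_iff₀ hfL] at h1
      linarith
    have hmono := (aux_mono f' f'' hd2 hf''pos).monotoneOn
    have hanti := (aux_anti f f' hd1 hf'neg).antitoneOn
    set M := (N:ℝ) ^ ((1:ℝ)-ε) with hMdef
    have hM0 : 0 < M := Real.rpow_pos_of_pos hN0 _
    have hterm1 : ∀ j ∈ (Finset.Icc 2 N).filter (fun j : ℕ => (1-ε) * L ≤ Real.log (j:ℝ)),
        Real.sqrt (f (Real.log j) - f L)
          ≤ Real.sqrt (1+δ) * (Real.sqrt (L - Real.log j) * gN) := by
      intro j hj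
      rw [Finset.mem_filter, Finset.mem_Icc] at hj
      obtain ⟨⟨hj2, hjN⟩, hPj⟩ := hj
      have hj0 : (0:ℝ) < j := by exact_mod_cast Nat.lt_of_lt_of_le (by norm_num) hj2
      have hlj2 : Real.log 2 ≤ Real.log j :=
        Real.log_le_log (by norm_num) (by exact_mod_cast hj2)
      have hljL : Real.log j ≤ L := Real.log_le_log hj0 (by exact_mod_cast hjN)
      have hmvt := (aux_mvt f f' f'' hd1 hd2 hf''pos _ _ hlj2 hljL).2
      have hf'j : -f' (Real.log j) ≤ (1+δ) * (-f' L) := by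
        have hm := hmono (Set.mem_Ici.2 hL2') (Set.mem_Ici.2 hlj2) hPj
        linarith
      have hub : f (Real.log j) - f L ≤ (1+δ) * ((L - Real.log j) * (-f' L)) := by
        nlinarith [sub_nonneg.2 hljL]
      calc Real.sqrt (f (Real.log j) - f L)
          ≤ Real.sqrt ((1+δ) * ((L - Real.log j) * (-f' L))) := Real.sqrt_le_sqrt hub
        _ = Real.sqrt (1+δ) * (Real.sqrt (L - Real.log j) * gN) := by
            rw [Real.sqrt_mul (by linarith : (0:ℝ) ≤ 1+δ),
              Real.sqrt_mul (sub_nonneg.2 hljL)]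
    have hterm2 : ∀ j ∈ (Finset.Icc 2 N).filter (fun j : ℕ => ¬ ((1-ε) * L ≤ Real.log (j:ℝ))),
        Real.sqrt (f (Real.log j) - f L) ≤ Real.sqrt (f (Real.log 2)) := by
      intro j hj
      rw [Finset.mem_filter, Finset.mem_Icc] at hj
      have hlj2 : Real.log 2 ≤ Real.log j :=
        Real.log_le_log (by norm_num) (by exact_mod_cast hj.1.1)
      have hfj : f (Real.log j) ≤ f (Real.log 2) :=
        hanti (Set.mem_Ici.2 le_rfl) (Set.mem_Ici.2 hlj2) hlj2
      have hfLpos : 0 < f L := hfpos _ hL2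
      exact Real.sqrt_le_sqrt (by linarith)
    have hcard : (((Finset.Icc 2 N).filter
        (fun j : ℕ => ¬ ((1-ε) * L ≤ Real.log (j:ℝ)))).card : ℝ) ≤ M := by
      have hsub : (Finset.Icc 2 N).filter (fun j : ℕ => ¬ ((1-ε) * L ≤ Real.log (j:ℝ)))
          ⊆ Finset.Icc 2 ⌊M⌋₊ := by
        intro j hj
        rw [Finset.mem_filter, Finset.mem_Icc] at hj
        rw [Finset.mem_Icc]
        obtain ⟨⟨hj2, hjN⟩, hPj⟩ := hj
        refine ⟨hj2, Nat.le_floor ?_⟩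
        have hj0 : (0:ℝ) < j := by exact_mod_cast Nat.lt_of_lt_of_le (by norm_num) hj2
        have hlt : Real.log j < (1-ε)*L := lt_of_not_ge hPj
        have hMlog : Real.log M = (1-ε)*L := by rw [hMdef, Real.log_rpow hN0]
        have : Real.log j < Real.log M := by rw [hMlog]; exact hlt
        exact le_of_lt ((Real.log_lt_log_iff hj0 hM0).1 this)
      calc (((Finset.Icc 2 N).filter (fun j : ℕ => ¬ ((1-ε) * L ≤ Real.log (j:ℝ)))).card : ℝ)
          ≤ ((Finset.Icc 2 ⌊M⌋₊).card : ℝ) := by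
            exact_mod_cast Finset.card_le_card hsub
        _ ≤ (⌊M⌋₊ : ℝ) := by
            rw [Nat.card_Icc]
            have : ⌊M⌋₊ + 1 - 2 ≤ ⌊M⌋₊ := by omega
            exact_mod_cast this
        _ ≤ M := Nat.floor_le hM0.le
    have hsplit : S N
        = (∑ j ∈ (Finset.Icc 2 N).filter (fun j : ℕ => (1-ε) * L ≤ Real.log (j:ℝ)),
            Real.sqrt (f (Real.log j) - f L))
          + ∑ j ∈ (Finset.Icc 2 N).filter (fun j : ℕ => ¬ ((1-ε) * L ≤ Real.log (j:ℝ))),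
            Real.sqrt (f (Real.log j) - f L) := by
      rw [hS, Finset.sum_filter_add_sum_filter_not]
    have hbound1 : (∑ j ∈ (Finset.Icc 2 N).filter (fun j : ℕ => (1-ε) * L ≤ Real.log (j:ℝ)),
          Real.sqrt (f (Real.log j) - f L))
        ≤ Real.sqrt (1+δ) * gN * ∑ j ∈ Finset.Icc 2 N, Real.sqrt (L - Real.log j) := by
      calc (∑ j ∈ (Finset.Icc 2 N).filter (fun j : ℕ => (1-ε) * L ≤ Real.log (j:ℝ)),
            Real.sqrt (f (Real.log j) - f L))
          ≤ ∑ j ∈ (Finset.Icc 2 N).filter (fun j : ℕ => (1-ε) * L ≤ Real.log (j:ℝ)),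
            Real.sqrt (1+δ) * (Real.sqrt (L - Real.log j) * gN) := Finset.sum_le_sum hterm1
        _ ≤ ∑ j ∈ Finset.Icc 2 N, Real.sqrt (1+δ) * (Real.sqrt (L - Real.log j) * gN) :=
            Finset.sum_le_sum_of_subset_of_nonneg (Finset.filter_subset _ _)
              (fun j _ _ => by positivity)
        _ = Real.sqrt (1+δ) * gN * ∑ j ∈ Finset.Icc 2 N, Real.sqrt (L - Real.log j) := by
            rw [Finset.mul_sum]
            exact Finset.sum_congr rfl fun j _ => by ring
    have hbound2 : (∑ j ∈ (Finset.Icc 2 N).filter (fun j : ℕ => ¬ ((1-ε) * L ≤ Real.log (j:ℝ))),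
          Real.sqrt (f (Real.log j) - f L)) ≤ M * Real.sqrt (f (Real.log 2)) := by
      calc (∑ j ∈ (Finset.Icc 2 N).filter (fun j : ℕ => ¬ ((1-ε) * L ≤ Real.log (j:ℝ))),
            Real.sqrt (f (Real.log j) - f L))
          ≤ ∑ _j ∈ (Finset.Icc 2 N).filter (fun j : ℕ => ¬ ((1-ε) * L ≤ Real.log (j:ℝ))),
            Real.sqrt (f (Real.log 2)) := Finset.sum_le_sum hterm2
        _ = (((Finset.Icc 2 N).filter (fun j : ℕ => ¬ ((1-ε) * L ≤ Real.log (j:ℝ)))).card : ℝ)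
            * Real.sqrt (f (Real.log 2)) := by
            rw [Finset.sum_const, nsmul_eq_mul]
        _ ≤ M * Real.sqrt (f (Real.log 2)) :=
            mul_le_mul_of_nonneg_right hcard (Real.sqrt_nonneg _)
    have hbN : (N:ℝ) * b N = ∑ j ∈ Finset.Icc 2 N, Real.sqrt (L - Real.log j) := by
      rw [hbdef]
      field_simp
      rfl
    have hSbound : S N ≤ Real.sqrt (1+δ) * gN * ((N:ℝ) * b N)
        + M * Real.sqrt (f (Real.log 2)) := by
      rw [hbN]
      linarith
    have hNgN : 0 < (N:ℝ) * gN := by positivity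
    have hNε : (0:ℝ) < (N:ℝ) ^ (ε:ℝ) := Real.rpow_pos_of_pos hN0 _
    have hdiv : S N / ((N:ℝ) * gN)
        ≤ Real.sqrt (1+δ) * b N
          + Real.sqrt (f (Real.log 2)) / ((N:ℝ)^ε * gN) := by
      have step : S N / ((N:ℝ)*gN)
          ≤ (Real.sqrt (1+δ) * gN * ((N:ℝ) * b N) + M * Real.sqrt (f (Real.log 2)))
            / ((N:ℝ)*gN) := by
        gcongr
      refine step.trans (le_of_eq ?_)
      have hMeq : M = (N:ℝ) / (N:ℝ)^(ε:ℝ) := by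
        rw [hMdef, Real.rpow_sub hN0, Real.rpow_one]
      rw [hMeq]
      field_simp
    have hfinal : Real.sqrt (f (Real.log 2)) / ((N:ℝ)^ε * gN) ≤ δ := by
      have hpos : 0 < (N:ℝ)^(ε:ℝ) * gN := by positivity
      rw [div_le_iff₀ hpos]
      rw [div_lt_iff₀ hδ] at h3
      nlinarith
    calc S N / ((N:ℝ) * gN) ≤ _ := hdiv
      _ ≤ Real.sqrt (1+δ) * b N + δ := by linarith
  -- assemble
  rw [tendsto_order]
  constructor
  · intro a ha
    filter_upwards [hbt.eventually_const_lt ha, eventually_ge_atTop 2] with N hbN hN2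
    exact lt_of_lt_of_le hbN (claim2 N hN2)
  · intro a ha
    have hL0pos : 0 < Real.sqrt Real.pi / 2 := by positivity
    have hL01 : Real.sqrt Real.pi / 2 < 1 := by
      rw [div_lt_iff₀ (by norm_num : (0:ℝ) < 2)]
      nlinarith [Real.sq_sqrt Real.pi_pos.le, Real.sqrt_nonneg Real.pi, Real.pi_lt_d2]
    set δ := min 1 ((a - Real.sqrt Real.pi / 2)/8) with hδdef
    have hδ0 : 0 < δ := lt_min one_pos (by linarith)
    have hδ1 : δ ≤ 1 := min_le_left _ _
    have hδa : δ ≤ (a - Real.sqrt Real.pi / 2)/8 := min_le_right _ _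
    have hsq : Real.sqrt (1+δ) ≤ 1 + δ := by
      nlinarith [Real.sq_sqrt (by linarith : (0:ℝ) ≤ 1+δ), Real.sqrt_nonneg (1+δ)]
    filter_upwards [claim3 δ hδ0,
      hbt.eventually_lt_const (show Real.sqrt Real.pi / 2 < Real.sqrt Real.pi / 2 + δ by linarith),
      eventually_ge_atTop 2] with N h3 hb2 hN2
    have hbnonneg : 0 ≤ b N := by
      rw [hbdef]
      exact div_nonneg (Finset.sum_nonneg fun j _ => Real.sqrt_nonneg _) (Nat.cast_nonneg N)
    have hsqpos : (0:ℝ) ≤ Real.sqrt (1+δ) := Real.sqrt_nonneg _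
    calc S N / ((N:ℝ) * Real.sqrt (-f' (Real.log N))) ≤ Real.sqrt (1+δ) * b N + δ := h3
      _ < a := by nlinarith [mul_le_mul_of_nonneg_right hsq hbnonneg]
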